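/- The measure ρ on S = {−,+}×ℕ defined by ρ(−,k) = ρ(+,k) = (2^{k+1}−1)·2^{-(k+2)} is Q-invariant for the Hata transition matrix, i.e. ρ(t) = Σ_{s∈S} ρ(s)·q(s,t) for all t ∈ S, and it is the unique Q-invariant measure up to a constant multiple: any nonzero measure ρ' on S with ρ'(t) = Σ_s ρ'(s)q(s,t) for all t satisfies ρ' = c·ρ for some constant c > 0. -/

import Mathlib

open scoped ENNReal Classical

noncomputable section

/-- The state space of the Markov chain for the Hata map: `(false,k)` codes `I_k^-`
and `(true,k)` codes `I_k^+`. -/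
abbrev S : Type := Bool × ℕ

/-- The transition matrix `Q` of the Hata map with `p = 1/2`:
`q((±,k),(±,k±1)) = 1/2` (same sign, neighbouring index) and
`q((∓,0),(±,j)) = 2^{-(j+2)}`; all other entries vanish. -/
def qH : S → S → ℝ≥0∞ := fun s t =>
  if s.1 = t.1 ∧ (t.2 = s.2 + 1 ∨ s.2 = t.2 + 1) then 1/2
  else if s.1 ≠ t.1 ∧ s.2 = 0 then (1/2)^(t.2+2)
  else 0

/-- The measure `ρ(±,k) = (2^{k+1}-1)·2^{-(k+2)}` on the state space. -/
def rhoH : S → ℝ≥0∞ := fun s => ((2:ℝ≥0∞)^(s.2+1) - 1) / 2^(s.2+2)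

lemma half_ne_top : (1/2 : ℝ≥0∞) ≠ ⊤ := by simp
lemma qH_same_up (b : Bool) (k : ℕ) : qH (b,k) (b,k+1) = 1/2 := by simp [qH]
lemma qH_same_down (b : Bool) (k : ℕ) : qH (b,k+1) (b,k) = 1/2 := by simp [qH]
lemma qH_flip (b : Bool) (j : ℕ) : qH (!b, 0) (b, j) = (1/2)^(j+2) := by simp [qH]

lemma sum_qH_zero (f : S → ℝ≥0∞) (b : Bool) :
    ∑' s : S, f s * qH s (b,0) = f (b,1) * (1/2) + f (!b,0) * ((1/2)^2) := by
  have h : ∀ s : S, s ∉ ({((b,1):S), ((!b,0):S)} : Finset S) → f s * qH s (b,0) = 0 := by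
    rintro ⟨c,m⟩ hs
    simp only [Finset.mem_insert, Finset.mem_singleton, Prod.mk.injEq, not_or, not_and] at hs
    by_cases hc : c = b
    · subst hc
      have hm : m ≠ 1 := by
        intro h; exact hs.1 rfl h
      simp only [qH]
      simp only [ne_eq]
      simp
      intro h; exact absurd h hm
    · have hcb : c = !b := by cases b <;> cases c <;> simp_all
      subst hcb
      have hm : m ≠ 0 := hs.2 rfl
      simp [qH, hm, hc]
  rw [tsum_eq_sum h, Finset.sum_insert (by simp), Finset.sum_singleton,
    qH_same_down b 0, qH_flip b 0]

lemma sum_qH_succ (f : S → ℝ≥0∞) (b : Bool) (k : ℕ) :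
    ∑' s : S, f s * qH s (b,k+1)
      = f (b,k) * (1/2) + f (b,k+2) * (1/2) + f (!b,0) * ((1/2)^(k+3)) := by
  have h : ∀ s : S, s ∉ ({((b,k):S), ((b,k+2):S), ((!b,0):S)} : Finset S) →
      f s * qH s (b,k+1) = 0 := by
    rintro ⟨c,m⟩ hs
    simp only [Finset.mem_insert, Finset.mem_singleton, Prod.mk.injEq, not_or, not_and] at hs
    by_cases hc : c = b
    · subst hc
      have hm1 : m ≠ k := fun h => hs.1 rfl h
      have hm2 : m ≠ k + 2 := fun h => hs.2.1 rfl h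
      simp only [qH]
      simp
      intro h; exact absurd h (by omega)
    · have hcb : c = !b := by cases b <;> cases c <;> simp_all
      subst hcb
      have hm : m ≠ 0 := hs.2.2 rfl
      simp [qH, hm, hc]
  rw [tsum_eq_sum h, Finset.sum_insert (by simp), Finset.sum_insert (by simp [Bool.eq_not_self]),
    Finset.sum_singleton, qH_same_up b k, qH_same_down b (k+1), qH_flip b (k+1)]
  ring

lemma rhoH_ne_top (s : S) : rhoH s ≠ ⊤ := by
  unfold rhoH
  apply (ENNReal.div_lt_top _ _).ne
  · exact (ENNReal.sub_ne_top (by simp))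
  · positivity

lemma one_le_two_pow_enn (n : ℕ) : (1:ℝ≥0∞) ≤ 2^(n+1) :=
  one_le_pow_of_one_le' (by norm_num) _

lemma rhoH_toReal (b : Bool) (k : ℕ) :
    (rhoH (b,k)).toReal = ((2:ℝ)^(k+1) - 1)/2^(k+2) := by
  unfold rhoH
  rw [ENNReal.toReal_div, ENNReal.toReal_sub_of_le (one_le_two_pow_enn k) (by simp)]
  simp [ENNReal.toReal_pow]

lemma enn_eq_of_toReal {a b : ℝ≥0∞} (ha : a ≠ ⊤) (hb : b ≠ ⊤) (h : a.toReal = b.toReal) :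
    a = b := (ENNReal.toReal_eq_toReal_iff' ha hb).mp h

lemma toReal_add3 {a b c : ℝ≥0∞} (ha : a ≠ ⊤) (hb : b ≠ ⊤) (hc : c ≠ ⊤) :
    (a + b + c).toReal = a.toReal + b.toReal + c.toReal := by
  rw [ENNReal.toReal_add (ENNReal.add_ne_top.2 ⟨ha, hb⟩) hc, ENNReal.toReal_add ha hb]

lemma toReal_half : (1/2 : ℝ≥0∞).toReal = 1/2 := by simp [ENNReal.toReal_div]

lemma toReal_halfpow (n : ℕ) : ((1/2 : ℝ≥0∞)^n).toReal = (1/2:ℝ)^n := by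
  rw [ENNReal.toReal_pow, toReal_half]


/-- The measure `ρ(±,k) = (2^{k+1}-1)·2^{-(k+2)}` is `Q`-invariant for the Hata transition
matrix, and it is the unique `Q`-invariant measure up to a constant multiple: any nonzero
(σ-finite, i.e. finite-valued on states) invariant measure `ρ'` equals `c·ρ` for some
constant `c > 0`. -/
theorem hata_chain_invariant_measure :
    (∀ t : S, rhoH t = ∑' s : S, rhoH s * qH s t)
    ∧ ∀ ρ' : S → ℝ≥0∞, (∃ s, ρ' s ≠ 0) → (∀ s, ρ' s < ⊤) →
        (∀ t : S, ρ' t = ∑' s : S, ρ' s * qH s t) →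
        ∃ c : ℝ≥0∞, 0 < c ∧ c ≠ ⊤ ∧ ∀ s, ρ' s = c * rhoH s := by
  constructor
  · rintro ⟨b, k⟩
    cases k with
    | zero =>
      rw [sum_qH_zero rhoH b]
      apply enn_eq_of_toReal (rhoH_ne_top _)
        (ENNReal.add_ne_top.2 ⟨ENNReal.mul_ne_top (rhoH_ne_top _) half_ne_top,
          ENNReal.mul_ne_top (rhoH_ne_top _) (by simp)⟩)
      rw [ENNReal.toReal_add (ENNReal.mul_ne_top (rhoH_ne_top _) half_ne_top)
          (ENNReal.mul_ne_top (rhoH_ne_top _) (by simp)),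
        ENNReal.toReal_mul, ENNReal.toReal_mul, toReal_half, toReal_halfpow,
        rhoH_toReal, rhoH_toReal, rhoH_toReal]
      norm_num
    | succ k =>
      rw [sum_qH_succ rhoH b k]
      apply enn_eq_of_toReal (rhoH_ne_top _)
        (ENNReal.add_ne_top.2 ⟨ENNReal.add_ne_top.2 ⟨ENNReal.mul_ne_top (rhoH_ne_top _) half_ne_top,
          ENNReal.mul_ne_top (rhoH_ne_top _) half_ne_top⟩,
          ENNReal.mul_ne_top (rhoH_ne_top _) (by simp)⟩)
      rw [toReal_add3 (ENNReal.mul_ne_top (rhoH_ne_top _) half_ne_top)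
          (ENNReal.mul_ne_top (rhoH_ne_top _) half_ne_top)
          (ENNReal.mul_ne_top (rhoH_ne_top _) (by simp)),
        ENNReal.toReal_mul, ENNReal.toReal_mul, ENNReal.toReal_mul, toReal_half, toReal_halfpow,
        rhoH_toReal, rhoH_toReal, rhoH_toReal, rhoH_toReal]
      have h2 : (2:ℝ) ≠ 0 := two_ne_zero
      simp only [div_pow, one_pow]
      field_simp
      ring
  · intro ρ' h0 hfin hinv
    have hfin' : ∀ s, ρ' s ≠ ⊤ := fun s => (hfin s).ne
    set x : Bool → ℕ → ℝ := fun b k => (ρ' (b,k)).toReal with hx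
    have hx0 : ∀ b k, 0 ≤ x b k := fun b k => ENNReal.toReal_nonneg
    have e1 : ∀ b, x b 0 = x b 1 * (1/2) + x (!b) 0 * (1/4) := by
      intro b
      have h := hinv (b,0)
      rw [sum_qH_zero ρ' b] at h
      have h' := congrArg ENNReal.toReal h
      rw [ENNReal.toReal_add (ENNReal.mul_ne_top (hfin' _) half_ne_top)
          (ENNReal.mul_ne_top (hfin' _) (by simp)),
        ENNReal.toReal_mul, ENNReal.toReal_mul, toReal_half, toReal_halfpow] at h'
      simp only [hx]
      norm_num at h' ⊢
      linarith [h']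
    have e2 : ∀ b k, x b (k+1)
        = x b k * (1/2) + x b (k+2) * (1/2) + x (!b) 0 * (1/2)^(k+3) := by
      intro b k
      have h := hinv (b,k+1)
      rw [sum_qH_succ ρ' b k] at h
      have h' := congrArg ENNReal.toReal h
      rw [toReal_add3 (ENNReal.mul_ne_top (hfin' _) half_ne_top)
          (ENNReal.mul_ne_top (hfin' _) half_ne_top)
          (ENNReal.mul_ne_top (hfin' _) (by simp)),
        ENNReal.toReal_mul, ENNReal.toReal_mul, ENNReal.toReal_mul,
        toReal_half, toReal_halfpow] at h'
      exact h'
    have key : ∀ b k, x b k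
        = (x b 0 + x (!b) 0) + (x b 0 - x (!b) 0) * k - x (!b) 0 * (1/2)^k := by
      intro b k
      induction k using Nat.twoStepInduction with
      | zero => norm_num
      | one =>
        have := e1 b
        push_cast
        nlinarith [this]
      | more n ih1 ih2 =>
        have h := e2 b n
        have hq1 : ((1:ℝ)/2)^(n+1) = (1/2)^n * (1/2) := pow_succ _ _
        have hq2 : ((1:ℝ)/2)^(n+2) = (1/2)^n * (1/2) * (1/2) := by
          rw [show n+2 = (n+1)+1 by omega, pow_succ, hq1]
        have hq3 : ((1:ℝ)/2)^(n+3) = (1/2)^n * (1/2) * (1/2) * (1/2) := by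
          rw [show n+3 = (n+2)+1 by omega, pow_succ, hq2]
        rw [hq3] at h
        rw [hq1] at ih2
        rw [hq2]
        push_cast at ih1 ih2 ⊢
        linear_combination (-2:ℝ) * h + 2 * ih2 - ih1
    have hsym : ∀ b, x b 0 = x (!b) 0 := by
      have hle : ∀ b, x (!b) 0 ≤ x b 0 := by
        intro b
        by_contra hlt
        push_neg at hlt
        obtain ⟨n, hn⟩ := exists_nat_gt ((x b 0 + x (!b) 0) / (x (!b) 0 - x b 0))
        have hc : (0:ℝ) < x (!b) 0 - x b 0 := by linarith
        have h1 : x b 0 + x (!b) 0 < (x (!b) 0 - x b 0) * n := by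
          rw [div_lt_iff₀ hc] at hn; linarith
        have h2 := key b n
        have h3 : (0:ℝ) < (1/2:ℝ)^n := by positivity
        nlinarith [hx0 b n, hx0 (!b) 0]
      intro b
      have h1 := hle b
      have h2 := hle (!b)
      rw [Bool.not_not] at h2
      linarith
    set m := x true 0 with hm
    have hmb : ∀ b, x b 0 = m := by
      intro b
      cases b
      · have := hsym true; simpa using this.symm
      · rfl
    have hclosed : ∀ b k, x b k = m * (2 - (1/2)^k) := by
      intro b k
      have := key b k
      rw [hmb b, hmb (!b)] at this
      rw [this]; ring
    have hmpos : 0 < m := by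
      rcases lt_or_eq_of_le (hx0 true 0) with h | h
      · exact h
      · exfalso
        obtain ⟨⟨b, k⟩, hbk⟩ := h0
        apply hbk
        have hz : x b k = 0 := by rw [hclosed b k, hm, ← h]; ring
        have := ENNReal.toReal_eq_zero_iff (ρ' (b,k))
        rcases this.mp hz with h' | h'
        · exact h'
        · exact absurd h' (hfin' _)
    refine ⟨ENNReal.ofReal (4*m), ENNReal.ofReal_pos.mpr (by linarith), ENNReal.ofReal_ne_top, ?_⟩
    rintro ⟨b, k⟩
    apply enn_eq_of_toReal (hfin' _) (ENNReal.mul_ne_top ENNReal.ofReal_ne_top (rhoH_ne_top _))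
    rw [ENNReal.toReal_mul, ENNReal.toReal_ofReal (by linarith), rhoH_toReal]
    have := hclosed b k
    rw [show ((1/2:ℝ))^k = 1/2^k by rw [div_pow, one_pow]] at this
    rw [show (ρ' (b,k)).toReal = x b k from rfl, this]
    have h2k : (2:ℝ)^k ≠ 0 := by positivity
    field_simp
    ring

end
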